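/- Let (V, g) be an n-dimensional real inner product space (n ≥ 3), Z a symmetric bilinear form with g-trace s, ω ∈ V nonzero, and suppose g(ω,k)·Z(j,l) − g(ω,j)·Z(k,l) = (1/(n−1))·[(g(ω,k)·s − Z(ω,k))·g(j,l) − (g(ω,j)·s − Z(ω,j))·g(k,l)] for all j,k,l, where Z(ω,x) denotes the bilinear form applied to ω and x. Then, with ζ defined by Z(ω,ω) = ζ·g(ω,ω), one has Z(k,l) = ((s−ζ)/(n−1))·g(k,l) + ((nζ−s)/(n−1))·g(ω,k)·g(ω,l)/g(ω,ω) for all k,l. -/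

import Mathlib

open scoped RealInnerProductSpace

/-- Theorem 5.2(1) (pointwise form): from equation (5.1) with the gradient term
eliminated by its trace, the symmetric bilinear form `Z` has the quasi-Einstein
structure `Z(k,l) = ((s−ζ)/(n−1))·g(k,l) + ((nζ−s)/(n−1))·g(ω,k)g(ω,l)/g(ω,ω)`. -/
theorem stmt_6 {V : Type*} [NormedAddCommGroup V] [InnerProductSpace ℝ V]
    [FiniteDimensional ℝ V]
    {n : ℕ} (hn : 3 ≤ n) (hdim : Module.finrank ℝ V = n)
    (Z : V →ₗ[ℝ] V →ₗ[ℝ] ℝ) (hZsym : ∀ x y, Z x y = Z y x)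
    (b : OrthonormalBasis (Fin n) ℝ V)
    (s : ℝ) (hs : ∑ i, Z (b i) (b i) = s)
    (ω : V) (hω : ω ≠ 0)
    (hrel : ∀ j k l, ⟪ω, k⟫ * Z j l - ⟪ω, j⟫ * Z k l
      = (1 / ((n : ℝ) - 1)) *
        ((⟪ω, k⟫ * s - Z ω k) * ⟪j, l⟫ - (⟪ω, j⟫ * s - Z ω j) * ⟪k, l⟫))
    (ζ : ℝ) (hζ : Z ω ω = ζ * ⟪ω, ω⟫) :
    ∀ k l, Z k l = ((s - ζ) / ((n : ℝ) - 1)) * ⟪k, l⟫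
      + (((n : ℝ) * ζ - s) / ((n : ℝ) - 1)) * (⟪ω, k⟫ * ⟪ω, l⟫ / ⟪ω, ω⟫) := by
  have hcast : (3:ℝ) ≤ (n:ℝ) := by exact_mod_cast hn
  have ha : ⟪ω, ω⟫ ≠ 0 := fun h => hω (inner_self_eq_zero.mp h)
  have hn1 : (n:ℝ) - 1 ≠ 0 := by linarith
  have hn2 : (n:ℝ) - 2 ≠ 0 := by linarith
  have hq : ∀ j : V, Z ω j = ζ * ⟪ω, j⟫ := by
    intro j
    have h := hrel j ω ω
    rw [hζ, hZsym j ω, real_inner_comm j ω] at h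
    have hc : ⟪ω, j⟫ = ⟪j, ω⟫ := real_inner_comm j ω
    have h2 : ((n:ℝ) - 2) * ⟪ω, ω⟫ * (Z ω j - ζ * ⟪ω, j⟫) = 0 := by
      field_simp at h
      linear_combination ⟪ω, ω⟫ * h - ((n:ℝ)-2) * ⟪ω, ω⟫ * ζ * hc
    rcases mul_eq_zero.mp h2 with h3 | h3
    · exact absurd h3 (mul_ne_zero hn2 ha)
    · linarith
  intro k l
  have h := hrel ω k l
  rw [hq l, hq k, hζ] at h
  field_simp at h
  have key : Z k l = ((s - ζ) * ⟪ω, ω⟫ * ⟪k, l⟫ + ((n:ℝ) * ζ - s) * ⟪ω, k⟫ * ⟪ω, l⟫)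
      / (((n:ℝ) - 1) * ⟪ω, ω⟫) := by
    rw [eq_div_iff (mul_ne_zero hn1 ha)]
    linear_combination -h
  rw [key]
  field_simp
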